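/- The Gegenbauer polynomial admits the expansion around x = −1: G_n(x,z) = Σ_{k=0}^n (2^n·C(n,k)/n!) · (−1)^{n+k} · (Π_{i=2k}^{n+k−1}(z + i/2)) · (Π_{i=0}^{k−1}(z+i)) · (x+1)^k, as an identity of bivariate polynomials in x and z. -/

import Mathlib

open Finset

/-- The Gegenbauer polynomial `G_n(x, z)` as a real-valued function of both variables. -/
noncomputable def gegenbauerFun (n : ℕ) (x z : ℝ) : ℝ :=
  ∑ k ∈ Finset.range (n / 2 + 1),
    (-1 : ℝ) ^ k * (∏ i ∈ Finset.range (n - k), (z + (i : ℝ))) /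
      ((k.factorial : ℝ) * ((n - 2 * k).factorial : ℝ)) * (2 * x) ^ (n - 2 * k)

/-- Auxiliary coefficient for the duplication formula for rising factorials. -/
noncomputable def gegC (m k : ℕ) : ℝ :=
  if 2*k ≤ m then (-1:ℝ)^k * 2^(m-2*k) * m.factorial / (k.factorial * (m-2*k).factorial) else 0

lemma gegC_zero (m : ℕ) : gegC (m+1) 0 = 2 * gegC m 0 := by
  simp [gegC, pow_succ]
  field_simp

lemma gegC_rec (m k : ℕ) :
    gegC (m+1) (k+1) = 2 * gegC m (k+1) - ((m:ℝ) - 2*k) * gegC m k := by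
  rcases le_or_gt (2*k+2) m with h | h
  · obtain ⟨j, rfl⟩ := Nat.exists_eq_add_of_le h
    have e1 : 2*k+2+j+1 - 2*(k+1) = j+1 := by omega
    have e2 : 2*k+2+j - 2*(k+1) = j := by omega
    have e3 : 2*k+2+j - 2*k = j+2 := by omega
    simp only [gegC, if_pos (by omega : 2*(k+1) ≤ 2*k+2+j+1),
      if_pos (by omega : 2*(k+1) ≤ 2*k+2+j), if_pos (by omega : 2*k ≤ 2*k+2+j),
      e1, e2, e3]
    have f1 : ((2*k+2+j+1).factorial : ℝ) = (2*k+2+j+1) * (2*k+2+j).factorial := by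
      rw [Nat.factorial_succ]; push_cast; ring
    have f2 : ((k+1).factorial : ℝ) = (k+1) * k.factorial := by
      rw [Nat.factorial_succ]; push_cast; ring
    have f3 : ((j+1).factorial : ℝ) = (j+1) * j.factorial := by
      rw [Nat.factorial_succ]; push_cast; ring
    have f4 : ((j+2).factorial : ℝ) = (j+2) * ((j+1) * j.factorial) := by
      rw [Nat.factorial_succ, Nat.factorial_succ]; push_cast; ring
    rw [f1, f2, f3, f4]
    have hk : (k.factorial : ℝ) ≠ 0 := Nat.cast_ne_zero.2 (Nat.factorial_ne_zero k)
    have hj : (j.factorial : ℝ) ≠ 0 := Nat.cast_ne_zero.2 (Nat.factorial_ne_zero j)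
    push_cast
    field_simp
    ring
  · rcases eq_or_lt_of_le (by omega : m ≤ 2*k+1) with h1 | h1
    · -- m = 2k+1
      have e1 : 2*k+1+1 - 2*(k+1) = 0 := by omega
      simp only [h1, gegC, if_pos (by omega : 2*(k+1) ≤ 2*k+1+1),
        if_neg (by omega : ¬ 2*(k+1) ≤ 2*k+1), if_pos (by omega : 2*k ≤ 2*k+1), e1,
        (by omega : 2*k+1-2*k = 1)]
      have f0 : ((2*k+1+1).factorial : ℝ) = (2*k+2) * (2*k+1).factorial := by
        rw [show 2*k+1+1 = (2*k+1)+1 from rfl, Nat.factorial_succ]; push_cast; ring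
      have f2 : ((k+1).factorial : ℝ) = (k+1) * k.factorial := by
        rw [Nat.factorial_succ]; push_cast; ring
      rw [f0, f2]
      have hk : (k.factorial : ℝ) ≠ 0 := Nat.cast_ne_zero.2 (Nat.factorial_ne_zero k)
      simp [Nat.factorial]
      field_simp
      ring
    · rcases eq_or_lt_of_le (by omega : m ≤ 2*k) with h2 | h2
      · -- m = 2k
        simp only [h2, gegC, if_neg (by omega : ¬ 2*(k+1) ≤ 2*k+1),
          if_neg (by omega : ¬ 2*(k+1) ≤ 2*k)]
        push_cast
        ring
      · -- m < 2k
        simp only [gegC, if_neg (by omega : ¬ 2*(k+1) ≤ m+1),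
          if_neg (by omega : ¬ 2*(k+1) ≤ m), if_neg (by omega : ¬ 2*k ≤ m)]
        ring

lemma gegC_top (m : ℕ) : gegC m (m+1) = 0 := by
  rw [gegC, if_neg (by omega)]

/-- Duplication-type expansion of the rising factorial. -/
lemma gegC_expand (m : ℕ) (w : ℝ) :
    ∏ i ∈ range m, (2*w + (i:ℝ)) =
      ∑ k ∈ range (m+1), gegC m k * ∏ i ∈ range (m-k), (w + (i:ℝ)) := by
  induction m with
  | zero => simp [gegC]
  | succ m ih =>
    rw [prod_range_succ, ih]
    rw [Finset.sum_range_succ' (fun k => gegC (m+1) k * ∏ i ∈ range (m+1-k), (w+(i:ℝ)))]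
    simp only [Nat.succ_sub_succ, Nat.sub_zero, gegC_rec, gegC_zero, sub_mul]
    rw [Finset.sum_sub_distrib]
    have key : (∑ k ∈ range (m+1), 2 * gegC m (k+1) * ∏ i ∈ range (m-k), (w+(i:ℝ)))
        + 2 * gegC m 0 * ∏ i ∈ range (m+1), (w+(i:ℝ))
        = ∑ k ∈ range (m+1), 2 * gegC m k * ∏ i ∈ range (m+1-k), (w+(i:ℝ)) := by
      have k2 : ∑ k ∈ range (m+1+1), 2 * gegC m k * ∏ i ∈ range (m+1-k), (w+(i:ℝ))
          = (∑ k ∈ range (m+1), 2 * gegC m (k+1) * ∏ i ∈ range (m-k), (w+(i:ℝ)))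
            + 2 * gegC m 0 * ∏ i ∈ range (m+1), (w+(i:ℝ)) := by
        rw [Finset.sum_range_succ' (fun k => 2 * gegC m k * ∏ i ∈ range (m+1-k), (w+(i:ℝ)))]
        simp only [Nat.succ_sub_succ, Nat.sub_zero]
      rw [← k2, Finset.sum_range_succ]
      simp [gegC_top]
    rw [add_comm_sub, ← add_sub_assoc] at *
    rw [key]
    rw [Finset.sum_mul, ← Finset.sum_sub_distrib]
    apply Finset.sum_congr rfl
    intro k hk
    have hkm : k ≤ m := by simpa using Nat.lt_succ_iff.mp (mem_range.mp hk)
    have e1 : m + 1 - k = (m - k) + 1 := by omega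
    rw [e1, prod_range_succ]
    have e2 : ((m - k : ℕ) : ℝ) = (m:ℝ) - k := by
      rw [Nat.cast_sub hkm]
    rw [e2]
    ring

/-- Summand of the double-sum form of the Gegenbauer polynomial. -/
noncomputable def gegF (n : ℕ) (x z : ℝ) (k j : ℕ) : ℝ :=
  if 2*k + j ≤ n then
    (-1:ℝ)^(n+j+k) * 2^(n-2*k) * (∏ i ∈ range (n-k), (z+(i:ℝ)))
      / (k.factorial * j.factorial * (n-2*k-j).factorial) * (x+1)^j
  else 0

lemma gegF_stepA (n : ℕ) (x z : ℝ) :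
    gegenbauerFun n x z = ∑ k ∈ range (n+1), ∑ j ∈ range (n+1), gegF n x z k j := by
  have stepk : ∀ k, 2*k ≤ n →
      (-1 : ℝ) ^ k * (∏ i ∈ Finset.range (n - k), (z + (i : ℝ))) /
        ((k.factorial : ℝ) * ((n - 2 * k).factorial : ℝ)) * (2 * x) ^ (n - 2 * k)
      = ∑ j ∈ range (n+1), gegF n x z k j := by
    intro k hk
    have hx : (2:ℝ)*x = 2*(x+1) + (-2) := by ring
    rw [hx, add_pow, Finset.mul_sum]
    have main : ∀ j ∈ range (n-2*k+1),
        (-1:ℝ)^k * (∏ i ∈ range (n-k), (z+(i:ℝ))) / (k.factorial * (n-2*k).factorial) *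
          ((2*(x+1))^j * (-2)^(n-2*k-j) * ((n-2*k).choose j : ℝ))
        = gegF n x z k j := by
      intro j hj
      have hjn : j ≤ n - 2*k := by have := mem_range.mp hj; omega
      obtain ⟨r, rfl⟩ : ∃ r, n = 2*k + j + r := ⟨n - 2*k - j, by omega⟩
      have e1 : 2*k+j+r - 2*k = j+r := by omega
      have e2 : 2*k+j+r - 2*k - j = r := by omega
      have e3 : 2*k+j+r - k = k+j+r := by omega
      rw [gegF.eq_def, if_pos (by omega)]
      simp only [e1, e2, e3]
      rw [show j+r-j = r from by omega]
      rw [Nat.cast_choose ℝ (by omega : j ≤ j+r)]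
      rw [show j+r-j = r from by omega]
      rw [show (-2:ℝ) = (-1) * 2 from by norm_num, mul_pow, mul_pow]
      rw [show 2*k+j+r+j+k = (k+r)+2*(k+j) from by ring, pow_add, pow_mul]
      have hk' : (k.factorial : ℝ) ≠ 0 := Nat.cast_ne_zero.2 (Nat.factorial_ne_zero k)
      have hj' : (j.factorial : ℝ) ≠ 0 := Nat.cast_ne_zero.2 (Nat.factorial_ne_zero j)
      have hr' : (r.factorial : ℝ) ≠ 0 := Nat.cast_ne_zero.2 (Nat.factorial_ne_zero r)
      have hjr' : ((j+r).factorial : ℝ) ≠ 0 := Nat.cast_ne_zero.2 (Nat.factorial_ne_zero _)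
      rw [pow_add]
      field_simp
      ring
    rw [Finset.sum_congr rfl main]
    apply Finset.sum_subset (Finset.range_subset_range.mpr (by omega))
    intro j hjbig hjsmall
    simp only [mem_range, not_lt] at hjsmall
    rw [gegF.eq_def, if_neg (by omega)]
  rw [gegenbauerFun]
  rw [Finset.sum_congr rfl (fun k hk => stepk k (by have := mem_range.mp hk; omega))]
  apply Finset.sum_subset (Finset.range_subset_range.mpr (by omega))
  intro k hkbig hksmall
  apply Finset.sum_eq_zero
  intro j hj
  rw [gegF.eq_def, if_neg (by
    simp only [mem_range, not_lt] at hksmall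
    omega)]

lemma gegF_stepB (n j : ℕ) (hj : j ≤ n) (x z : ℝ) :
    (2 : ℝ) ^ n * (n.choose j : ℝ) / (n.factorial : ℝ) * (-1 : ℝ) ^ (n + j) *
      (∏ i ∈ Finset.Ico (2 * j) (n + j), (z + (i : ℝ) / 2)) *
      (∏ i ∈ Finset.range j, (z + (i : ℝ))) * (x + 1) ^ j
    = ∑ k ∈ range (n+1), gegF n x z k j := by
  obtain ⟨m, rfl⟩ : ∃ m, n = j + m := ⟨n - j, by omega⟩
  have hprod : (∏ i ∈ Finset.Ico (2 * j) (j + m + j), (z + (i : ℝ) / 2))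
      = ∑ k ∈ range (m+1), gegC m k * (∏ i ∈ range (m-k), (z + (j:ℝ) + i)) * (2:ℝ)⁻¹^m := by
    rw [Finset.prod_Ico_eq_prod_range]
    rw [show j + m + j - 2*j = m from by omega]
    have : ∀ i ∈ range m, (z + ((2*j+i : ℕ) : ℝ)/2) = (2*(z+(j:ℝ)) + i) * (2:ℝ)⁻¹ := by
      intro i _; push_cast; ring
    rw [Finset.prod_congr rfl this, Finset.prod_mul_distrib, Finset.prod_const,
      gegC_expand m (z + (j:ℝ)), Finset.sum_mul, Finset.card_range]
  rw [hprod, Finset.mul_sum, Finset.sum_mul, Finset.sum_mul]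
  have main : ∀ k ∈ range (m+1),
      (2:ℝ)^(j+m) * ((j+m).choose j : ℝ) / ((j+m).factorial : ℝ) * (-1:ℝ)^(j+m+j) *
        (gegC m k * (∏ i ∈ range (m-k), (z + (j:ℝ) + i)) * (2:ℝ)⁻¹^m) *
        (∏ i ∈ range j, (z + (i:ℝ))) * (x+1)^j
      = gegF (j+m) x z k j := by
    intro k hk
    by_cases h2 : 2*k ≤ m
    · obtain ⟨r, rfl⟩ : ∃ r, m = 2*k + r := ⟨m - 2*k, by omega⟩
      rw [gegC.eq_def, if_pos (by omega), gegF.eq_def, if_pos (by omega)]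
      rw [show 2*k+r - 2*k = r from by omega,
          show j+(2*k+r) - 2*k = j+r from by omega,
          show j+r-j = r from by omega,
          show j+(2*k+r) - k = j+(k+r) from by omega,
          show 2*k+r-k = k+r from by omega]
      have hmerge : (∏ i ∈ range (j+(k+r)), (z+(i:ℝ)))
          = (∏ i ∈ range j, (z+(i:ℝ))) * ∏ i ∈ range (k+r), (z + (j:ℝ) + i) := by
        rw [Finset.prod_range_add]
        congr 1
        apply Finset.prod_congr rfl
        intro i _; push_cast; ring
      rw [hmerge]
      rw [Nat.cast_choose ℝ (by omega : j ≤ j + (2*k+r))]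
      rw [show j+(2*k+r) - j = 2*k+r from by omega]
      rw [show j+(2*k+r)+j+k = (r+k) + 2*(j+k) from by ring,
          show j+(2*k+r)+j = r + 2*(j+k) from by ring]
      simp only [pow_add, pow_mul, neg_one_sq, one_pow, mul_one, one_mul, inv_pow]
      have hk' : (k.factorial : ℝ) ≠ 0 := Nat.cast_ne_zero.2 (Nat.factorial_ne_zero k)
      have hj' : (j.factorial : ℝ) ≠ 0 := Nat.cast_ne_zero.2 (Nat.factorial_ne_zero j)
      have hr' : (r.factorial : ℝ) ≠ 0 := Nat.cast_ne_zero.2 (Nat.factorial_ne_zero r)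
      have ha : (((j+(2*k+r)).factorial : ℝ)) ≠ 0 := Nat.cast_ne_zero.2 (Nat.factorial_ne_zero _)
      have hb : (((2*k+r).factorial : ℝ)) ≠ 0 := Nat.cast_ne_zero.2 (Nat.factorial_ne_zero _)
      field_simp
    · rw [gegC.eq_def, if_neg h2, gegF.eq_def, if_neg (by omega)]
      ring
  rw [Finset.sum_congr rfl main]
  apply Finset.sum_subset (Finset.range_subset_range.mpr (by omega))
  intro k _ hksmall
  simp only [mem_range, not_lt] at hksmall
  rw [gegF.eq_def, if_neg (by omega)]

/-- Expansion of the Gegenbauer polynomial around `x = -1`: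
`G_n(x,z) = Σ_{k=0}^n (2^n C(n,k)/n!) (-1)^{n+k} (Π_{i=2k}^{n+k-1}(z+i/2)) (Π_{i=0}^{k-1}(z+i)) (x+1)^k`,
as an identity of bivariate polynomials (i.e. for all real `x, z`). -/
theorem gegenbauer_expansion_at_neg_one (n : ℕ) :
    ∀ x z : ℝ,
      gegenbauerFun n x z =
        ∑ k ∈ Finset.range (n + 1),
          (2 : ℝ) ^ n * (n.choose k : ℝ) / (n.factorial : ℝ) * (-1 : ℝ) ^ (n + k) *
            (∏ i ∈ Finset.Ico (2 * k) (n + k), (z + (i : ℝ) / 2)) *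
            (∏ i ∈ Finset.range k, (z + (i : ℝ))) * (x + 1) ^ k := by
  intro x z
  rw [gegF_stepA n x z, Finset.sum_comm]
  exact Finset.sum_congr rfl fun j hj =>
    (gegF_stepB n j (by have := mem_range.mp hj; omega) x z).symm
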